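/- arXiv:2509.22446 — 2 statements merged into one kernel-verified Lean document; each statement's English description precedes it below -/
import Mathlib

section
/- For any real numbers a, b, c and target θ, |a + b − clip(c, min(a,b), max(a,b)) − θ| ≤ max(|a − θ|, |b − θ|). -/
noncomputable def clip (x y z : ℝ) : ℝ := max y (min x z)

theorem acc_error_le_max (a b c θ : ℝ) :
    |a + b - clip c (min a b) (max a b) - θ| ≤ max (|a - θ|) (|b - θ|) := by
  have h1 : min a b ≤ clip c (min a b) (max a b) := le_max_left _ _
  have h2 : clip c (min a b) (max a b) ≤ max a b :=
    max_le (min_le_max) (min_le_right _ _)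
  have hs : min a b + max a b = a + b := min_add_max a b
  have la := le_max_left (|a - θ|) (|b - θ|)
  have lb := le_max_right (|a - θ|) (|b - θ|)
  have na := neg_abs_le (a - θ); have pa := le_abs_self (a - θ)
  have nb := neg_abs_le (b - θ); have pb := le_abs_self (b - θ)
  rw [abs_le]
  rcases le_total a b with hab | hab <;>
    [rw [min_eq_left hab, max_eq_right hab] at h1 h2 ⊢;
     rw [min_eq_right hab, max_eq_left hab] at h1 h2 ⊢] <;>
    constructor <;> linarith
end

section
/- For real numbers a, b, c with a ≠ b and θ ∈ ℝ, setting λ = (a − clip(c, min(a,b), max(a,b)))/(a − b), we have λ ∈ [0,1] and |a + b − clip(c, min(a,b), max(a,b)) − θ| ≤ λ·|a − θ| + (1−λ)·|b − θ|. -/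
theorem acc_error_convex_bound (a b c θ : ℝ) (hab : a ≠ b) :
    (a - clip c (min a b) (max a b)) / (a - b) ∈ Set.Icc (0 : ℝ) 1 ∧
    |a + b - clip c (min a b) (max a b) - θ| ≤
      ((a - clip c (min a b) (max a b)) / (a - b)) * |a - θ| +
      (1 - (a - clip c (min a b) (max a b)) / (a - b)) * |b - θ| := by
  set m := clip c (min a b) (max a b) with hm
  have hmin : min a b ≤ m := le_max_left _ _
  have hmax : m ≤ max a b := max_le (min_le_max) (min_le_right _ _)
  set l : ℝ := (a - m) / (a - b) with hl
  have hsub : a - b ≠ 0 := sub_ne_zero.mpr hab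
  have hl' : l = (m - a) / (b - a) := by
    rw [hl, div_eq_div_iff hsub (sub_ne_zero.mpr hab.symm)]; ring
  have hbounds : 0 ≤ l ∧ l ≤ 1 := by
    rcases lt_or_gt_of_ne hab with h | h
    · have h1 : a ≤ m := by
        have : min a b = a := min_eq_left h.le
        linarith [this ▸ hmin]
      have h2 : m ≤ b := by
        have : max a b = b := max_eq_right h.le
        linarith [this ▸ hmax]
      rw [hl']
      exact ⟨div_nonneg (by linarith) (by linarith),
        div_le_one_of_le₀ (by linarith) (by linarith)⟩
    · have h1 : m ≤ a := by
        have : max a b = a := max_eq_left h.le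
        linarith [this ▸ hmax]
      have h2 : b ≤ m := by
        have : min a b = b := min_eq_right h.le
        linarith [this ▸ hmin]
      rw [hl]
      exact ⟨div_nonneg (by linarith) (by linarith),
        div_le_one_of_le₀ (by linarith) (by linarith)⟩
  obtain ⟨hl0, hl1⟩ := hbounds
  refine ⟨⟨hl0, hl1⟩, ?_⟩
  have key : a + b - m - θ = l * (a - θ) + (1 - l) * (b - θ) := by
    field_simp [hl]
    rw [hl]; field_simp; ring
  rw [key]
  calc |l * (a - θ) + (1 - l) * (b - θ)| ≤ |l * (a - θ)| + |(1 - l) * (b - θ)| :=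
        abs_add_le _ _
    _ = l * |a - θ| + (1 - l) * |b - θ| := by
        rw [abs_mul, abs_mul, abs_of_nonneg hl0, abs_of_nonneg (show (0:ℝ) ≤ 1 - l by linarith)]
end
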